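/- arXiv:2509.16657 — 2 statements merged into one kernel-verified Lean document; each statement's English description precedes it below -/
import Mathlib

section
/- Let G = C(α₁,...,α_{2k}) with k ≥ 2 and α_{2k} ≥ 2, and let n = α₁ + ... + α_{2k}. Then -2 is an eigenvalue of the eccentricity matrix ε(G) with multiplicity at least (α₂ + α₄ + ... + α_{2k}) - k. -/
open Finset Matrix

/-- The cograph `C(α₁,…,α_l)` obtained by the recursive construction
`C(α₁) = complement of K_{α₁}` and
`C(α₁,…,αᵢ) = complement of (C(α₁,…,αᵢ₋₁) ⊔ K_{αᵢ})`,
presented by its resulting explicit adjacency relation: two distinct vertices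
in the same (0-based) block `i` are adjacent iff `l - 1 - i` is odd, and
vertices in different blocks `a < b` are adjacent iff `l - 1 - b` is even. -/
def Cgraph (l : ℕ) (α : Fin l → ℕ) : SimpleGraph (Σ i : Fin l, Fin (α i)) where
  Adj u v := u ≠ v ∧ ((u.1 = v.1 ∧ Odd (l - 1 - u.1.val)) ∨
      (u.1 ≠ v.1 ∧ Even (l - 1 - max u.1.val v.1.val)))
  symm := ⟨by
    rintro u v ⟨h1, h2⟩
    refine ⟨h1.symm, ?_⟩
    rcases h2 with ⟨he, ho⟩ | ⟨hne, hev⟩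
    · exact Or.inl ⟨he.symm, he ▸ ho⟩
    · exact Or.inr ⟨hne.symm, by rwa [max_comm]⟩⟩
  loopless := ⟨by rintro u ⟨h, -⟩; exact h rfl⟩

/-- The eccentricity of a vertex: the largest distance from it to any vertex. -/
noncomputable def ecc {V : Type*} [Fintype V] (G : SimpleGraph V) (v : V) : ℕ :=
  Finset.univ.sup fun u => G.dist v u

/-- The eccentricity matrix: entry `d(u,v)` if `d(u,v) = min (e u) (e v)`, else `0`. -/
noncomputable def eccMatrix {V : Type*} [Fintype V] (G : SimpleGraph V) :
    Matrix V V ℝ :=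
  Matrix.of fun u v =>
    if G.dist u v = min (ecc G u) (ecc G v) then (G.dist u v : ℝ) else 0

/-- Geometric multiplicity of `μ` as an eigenvalue of `M`. -/
noncomputable def eigMult {n : Type*} [Fintype n] [DecidableEq n]
    (M : Matrix n n ℝ) (μ : ℝ) : ℕ :=
  Module.finrank ℝ (LinearMap.ker (Matrix.toLin' (M - μ • (1 : Matrix n n ℝ))))

/- ====================  auxiliary lemmas  ==================== -/

lemma sigma_ext' {m : ℕ} {β : Fin m → ℕ} {u v : Σ i : Fin m, Fin (β i)}
    (h1 : u.1.val = v.1.val) (h2 : u.2.val = v.2.val) : u = v := by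
  obtain ⟨⟨i, hi⟩, s⟩ := u
  obtain ⟨⟨i', hi'⟩, t⟩ := v
  simp only at h1
  subst h1
  have hst : s = t := Fin.ext h2
  subst hst
  rfl

lemma sum_range_odd (k : ℕ) :
    (∑ x ∈ Finset.range (2*k), if x % 2 = 1 then 1 else 0) = k := by
  induction k with
  | zero => simp
  | succ n ih =>
    have h : 2 * (n+1) = (2*n) + 1 + 1 := by ring
    rw [h, Finset.sum_range_succ, Finset.sum_range_succ, ih]
    have h1 : ¬ ((2*n) % 2 = 1) := by omega
    have h2 : (2*n+1) % 2 = 1 := by omega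
    rw [if_neg h1, if_pos h2]

lemma card_odd (k : ℕ) :
    ((Finset.univ : Finset (Fin (2*k))).filter (fun i => i.val % 2 = 1)).card = k := by
  rw [Finset.card_filter]
  rw [Fin.sum_univ_eq_sum_range (fun i => if i % 2 = 1 then 1 else 0) (2*k)]
  exact sum_range_odd k

section graph

variable {k : ℕ} {α : Fin (2*k) → ℕ}

lemma Cg_adj {u v : Σ i : Fin (2*k), Fin (α i)} (h : u.1 ≠ v.1)
    (he : Even (2*k - 1 - max u.1.val v.1.val)) : (Cgraph (2*k) α).Adj u v :=
  ⟨fun e => h (congrArg Sigma.fst e), Or.inr ⟨h, he⟩⟩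

lemma Cg_adj_val {u v : Σ i : Fin (2*k), Fin (α i)} (h : u.1.val ≠ v.1.val)
    (he : (2*k - 1 - max u.1.val v.1.val) % 2 = 0) : (Cgraph (2*k) α).Adj u v :=
  Cg_adj (fun e => h (congrArg Fin.val e)) (Nat.even_iff.2 he)

lemma Cg_not_adj_same {u v : Σ i : Fin (2*k), Fin (α i)} (h : u.1 = v.1)
    (ho : u.1.val % 2 = 1) : ¬ (Cgraph (2*k) α).Adj u v := by
  rintro ⟨-, ⟨-, hodd⟩ | ⟨hne, -⟩⟩
  · rw [Nat.odd_iff] at hodd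
    have := u.1.isLt
    omega
  · exact hne h

lemma Cg_common (hk : 2 ≤ k) (hα : ∀ i, 1 ≤ α i)
    {u v : Σ i : Fin (2*k), Fin (α i)} (hne : u ≠ v)
    (hna : ¬ (Cgraph (2*k) α).Adj u v) :
    ∃ w, (Cgraph (2*k) α).Adj u w ∧ (Cgraph (2*k) α).Adj w v := by
  by_cases hu : u.1.val = 2*k - 1 <;> by_cases hv : v.1.val = 2*k - 1
  · -- both in the last block: common neighbor in block 0
    refine ⟨⟨⟨0, by omega⟩, ⟨0, hα _⟩⟩, Cg_adj_val ?_ ?_, Cg_adj_val ?_ ?_⟩ <;>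
      · simp only [Fin.val_mk]
        omega
  · -- u in last block, v not: they are adjacent, contradiction
    exact absurd (Cg_adj_val (by omega) (by have := v.1.isLt; omega)) hna
  · exact absurd ((Cgraph (2*k) α).adj_symm
      (Cg_adj_val (by omega) (by have := u.1.isLt; omega))) hna
  · -- neither in last block: common neighbor in last block
    refine ⟨⟨⟨2*k-1, by omega⟩, ⟨0, hα _⟩⟩, Cg_adj_val ?_ ?_, Cg_adj_val ?_ ?_⟩ <;>
      · simp only [Fin.val_mk]
        first
          | (have := u.1.isLt; omega)
          | (have := v.1.isLt; omega)

lemma Cg_dist_le_two (hk : 2 ≤ k) (hα : ∀ i, 1 ≤ α i)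
    (u v : Σ i : Fin (2*k), Fin (α i)) : (Cgraph (2*k) α).dist u v ≤ 2 := by
  by_cases he : u = v
  · subst he; simp [SimpleGraph.dist_self]
  by_cases ha : (Cgraph (2*k) α).Adj u v
  · have := SimpleGraph.dist_le (SimpleGraph.Walk.cons ha SimpleGraph.Walk.nil)
    simpa using this.trans (by norm_num)
  · obtain ⟨w, h1, h2⟩ := Cg_common hk hα he ha
    have := SimpleGraph.dist_le
      (SimpleGraph.Walk.cons h1 (SimpleGraph.Walk.cons h2 SimpleGraph.Walk.nil))
    simpa using this

lemma Cg_dist_eq_two (hk : 2 ≤ k) (hα : ∀ i, 1 ≤ α i)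
    {u v : Σ i : Fin (2*k), Fin (α i)} (hne : u ≠ v)
    (hna : ¬ (Cgraph (2*k) α).Adj u v) : (Cgraph (2*k) α).dist u v = 2 := by
  obtain ⟨w, h1, h2⟩ := Cg_common hk hα hne hna
  have hr : (Cgraph (2*k) α).Reachable u v :=
    ⟨SimpleGraph.Walk.cons h1 (SimpleGraph.Walk.cons h2 SimpleGraph.Walk.nil)⟩
  have h0 := hr.pos_dist_of_ne hne
  have h1' : (Cgraph (2*k) α).dist u v ≠ 1 :=
    fun h => hna (SimpleGraph.dist_eq_one_iff_adj.mp h)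
  have h2' := Cg_dist_le_two hk hα u v
  omega

lemma Cg_partner (hk : 2 ≤ k) (hα : ∀ i, 1 ≤ α i) (j : Fin (2*k))
    (hj : j.val = 2*k - 1) (hlast : 2 ≤ α j)
    (w : Σ i : Fin (2*k), Fin (α i)) :
    ∃ u, w ≠ u ∧ ¬ (Cgraph (2*k) α).Adj w u := by
  obtain ⟨i, s⟩ := w
  by_cases hw : i.val = 2*k-1
  · -- w in the last block; take the other vertex of the same block
    have hij : i = j := Fin.ext (by omega)
    have h2 : 2 ≤ α i := hij ▸ hlast
    refine ⟨⟨i, ⟨if s.val = 0 then 1 else 0, by split <;> omega⟩⟩, ?_,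
      Cg_not_adj_same rfl (by simp only; omega)⟩
    intro h
    rw [Sigma.mk.inj_iff] at h
    have hst := heq_iff_eq.mp h.2
    have := congrArg Fin.val hst
    simp only [Fin.val_mk] at this
    split at this <;> omega
  · by_cases h2 : i.val = 2*k-2
    · -- take a vertex in block 0
      refine ⟨⟨⟨0, by omega⟩, ⟨0, hα _⟩⟩, ?_, ?_⟩
      · intro h
        have := congrArg (fun z : (Σ i : Fin (2*k), Fin (α i)) => z.1.val) h
        simp only [Fin.val_mk] at this
        omega
      · rintro ⟨-, ⟨hb, -⟩ | ⟨-, he⟩⟩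
        · have := congrArg Fin.val hb
          simp only [Fin.val_mk] at this
          omega
        · rw [Nat.even_iff] at he
          simp only [Fin.val_mk] at he
          omega
    · -- take a vertex in block 2k-2
      have hilt := i.isLt
      refine ⟨⟨⟨2*k-2, by omega⟩, ⟨0, hα _⟩⟩, ?_, ?_⟩
      · intro h
        have := congrArg (fun z : (Σ i : Fin (2*k), Fin (α i)) => z.1.val) h
        simp only [Fin.val_mk] at this
        omega
      · rintro ⟨-, ⟨hb, -⟩ | ⟨-, he⟩⟩
        · have := congrArg Fin.val hb
          simp only [Fin.val_mk] at this
          omega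
        · rw [Nat.even_iff] at he
          simp only [Fin.val_mk] at he
          omega

lemma Cg_ecc (hk : 2 ≤ k) (hα : ∀ i, 1 ≤ α i) (j : Fin (2*k))
    (hj : j.val = 2*k - 1) (hlast : 2 ≤ α j)
    (w : Σ i : Fin (2*k), Fin (α i)) : ecc (Cgraph (2*k) α) w = 2 := by
  obtain ⟨u, hne, hna⟩ := Cg_partner hk hα j hj hlast w
  refine le_antisymm (Finset.sup_le fun u _ => Cg_dist_le_two hk hα w u) ?_
  have h2 := Cg_dist_eq_two hk hα hne hna
  calc (2 : ℕ) = (Cgraph (2*k) α).dist w u := h2.symm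
    _ ≤ _ := Finset.le_sup (Finset.mem_univ u)

open Classical in
lemma Cg_entry (hk : 2 ≤ k) (hα : ∀ i, 1 ≤ α i) (j : Fin (2*k))
    (hj : j.val = 2*k - 1) (hlast : 2 ≤ α j)
    (u v : Σ i : Fin (2*k), Fin (α i)) :
    eccMatrix (Cgraph (2*k) α) u v =
      if u ≠ v ∧ ¬ (Cgraph (2*k) α).Adj u v then 2 else 0 := by
  unfold eccMatrix
  rw [Matrix.of_apply, Cg_ecc hk hα j hj hlast, Cg_ecc hk hα j hj hlast, min_self]
  by_cases he : u = v
  · subst he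
    simp [SimpleGraph.dist_self]
  by_cases ha : (Cgraph (2*k) α).Adj u v
  · have hd : (Cgraph (2*k) α).dist u v = 1 := SimpleGraph.dist_eq_one_iff_adj.mpr ha
    rw [hd]
    simp [he, ha]
  · have hd := Cg_dist_eq_two hk hα he ha
    rw [hd]
    simp [he, ha]

end graph

/-- For `G = C(α₁,…,α_{2k})` with `k ≥ 2`, `α_{2k} ≥ 2`, `-2` is an eigenvalue
of `ε(G)` with multiplicity at least `α₂ + α₄ + ⋯ + α_{2k} - k` (even-indexed
blocks of the paper are the 0-based odd indices here). -/
theorem stmt4 (k : ℕ) (hk : 2 ≤ k) (α : Fin (2*k) → ℕ) (hα : ∀ i, 1 ≤ α i)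
    (j : Fin (2*k)) (hj : j.val = 2*k - 1) (hlast : 2 ≤ α j) :
    (∑ i ∈ Finset.univ.filter (fun i : Fin (2*k) => i.val % 2 = 1), α i) - k ≤
      eigMult (eccMatrix (Cgraph (2*k) α)) (-2) := by
  classical
  set V := (Σ i : Fin (2*k), Fin (α i)) with hV
  set G := Cgraph (2*k) α with hG
  set M : Matrix V V ℝ := eccMatrix G - (-2 : ℝ) • 1 with hM
  -- entry formula for M
  have hMapp : ∀ u v : V, M u v =
      (if u ≠ v ∧ ¬ G.Adj u v then 2 else 0) + (if u = v then 2 else 0) := by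
    intro u v
    rw [hM, Matrix.sub_apply, Matrix.smul_apply, Matrix.one_apply,
      Cg_entry hk hα j hj hlast]
    by_cases huv : u = v <;> simp [huv, hG]
  -- column equality within odd blocks
  have hcol : ∀ (i : Fin (2*k)), i.val % 2 = 1 → ∀ (w a b : V),
      a.1 = i → b.1 = i → M w a = M w b := by
    intro i hoi w a b ha hb
    rw [hMapp, hMapp]
    by_cases hwi : w.1 = i
    · have hna : ¬ G.Adj w a := Cg_not_adj_same (hwi.trans ha.symm) (by rw [hwi]; exact hoi)
      have hnb : ¬ G.Adj w b := Cg_not_adj_same (hwi.trans hb.symm) (by rw [hwi]; exact hoi)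
      have e1 : (if w ≠ a ∧ ¬ G.Adj w a then (2:ℝ) else 0) + (if w = a then 2 else 0) = 2 := by
        by_cases hwa : w = a <;> simp [hwa, hna]
      have e2 : (if w ≠ b ∧ ¬ G.Adj w b then (2:ℝ) else 0) + (if w = b then 2 else 0) = 2 := by
        by_cases hwb : w = b <;> simp [hwb, hnb]
      rw [e1, e2]
    · have hwa : w ≠ a := fun h => hwi (h ▸ ha)
      have hwb : w ≠ b := fun h => hwi (h ▸ hb)
      have hadj : G.Adj w a ↔ G.Adj w b := by
        constructor
        · rintro ⟨h1, ⟨h2, -⟩ | ⟨h2, h3⟩⟩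
          · exact absurd (h2.trans ha) hwi
          · refine ⟨hwb, Or.inr ⟨fun h => hwi (h.trans hb), ?_⟩⟩
            have : b.1.val = a.1.val := by rw [ha, hb]
            rwa [this]
        · rintro ⟨h1, ⟨h2, -⟩ | ⟨h2, h3⟩⟩
          · exact absurd (h2.trans hb) hwi
          · refine ⟨hwa, Or.inr ⟨fun h => hwi (h.trans ha), ?_⟩⟩
            have : a.1.val = b.1.val := by rw [ha, hb]
            rwa [this]
      by_cases hA : G.Adj w a
      · simp [hwa, hwb, hA, hadj.mp hA]
      · have hB : ¬ G.Adj w b := fun h => hA (hadj.mpr h)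
        simp [hwa, hwb, hA, hB]
  -- index type for the eigenvectors
  set β : Fin (2*k) → ℕ := fun i => if i.val % 2 = 1 then α i - 1 else 0 with hβ
  set ι := (Σ i : Fin (2*k), Fin (β i)) with hι
  have hodd : ∀ p : ι, p.1.val % 2 = 1 := by
    intro p
    by_contra h
    have h2 : (p.2 : ℕ) < (if (p.1 : ℕ) % 2 = 1 then α p.1 - 1 else 0) := p.2.isLt
    rw [if_neg h] at h2
    omega
  have hlt : ∀ p : ι, p.2.val + 1 < α p.1 := by
    intro p
    have h2 : (p.2 : ℕ) < (if (p.1 : ℕ) % 2 = 1 then α p.1 - 1 else 0) := p.2.isLt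
    rw [if_pos (hodd p)] at h2
    have := hα p.1
    omega
  set vtx : ι → V := fun p => ⟨p.1, ⟨p.2.val + 1, hlt p⟩⟩ with hvtx
  set zv : ι → V := fun p => ⟨p.1, ⟨0, hα p.1⟩⟩ with hzv
  set x : ι → V → ℝ :=
    fun p v => (if v = vtx p then 1 else 0) - (if v = zv p then 1 else 0) with hx
  -- each x p is in the kernel
  have hker : ∀ p : ι, M.mulVec (x p) = 0 := by
    intro p
    funext w
    have hmv : (M.mulVec (x p)) w = M w (vtx p) - M w (zv p) := by
      simp [Matrix.mulVec, dotProduct, hx, mul_sub, Finset.sum_sub_distrib,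
        mul_ite, mul_one, mul_zero]
      rw [Finset.sum_eq_single (vtx p) (fun b _ hb => if_neg hb) (by simp),
        Finset.sum_eq_single (zv p) (fun b _ hb => if_neg hb) (by simp), if_pos rfl, if_pos rfl]
    rw [hmv, hcol p.1 (hodd p) w (vtx p) (zv p) rfl rfl, sub_self]
    rfl
  -- linear independence
  have hval : ∀ p q : ι, vtx p = vtx q → p = q := by
    intro p q h
    have h1 := congrArg (fun z : V => z.1.val) h
    have h2 : p.2.val + 1 = q.2.val + 1 := congrArg (fun z : V => z.2.val) h
    simp only [hvtx] at h1
    exact sigma_ext' h1 (by omega)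
  have hx0 : ∀ p q : ι, x q (vtx p) = if p = q then 1 else 0 := by
    intro p q
    have hne2 : vtx p ≠ zv q := by
      intro h
      have := congrArg (fun z : V => z.2.val) h
      simp [hvtx, hzv] at this
    by_cases hpq : p = q
    · subst hpq
      simp [hx, hne2]
    · have hv : vtx p ≠ vtx q := fun h => hpq (hval _ _ h)
      simp [hx, hv, hne2, hpq]
  have hli : LinearIndependent ℝ x := by
    rw [Fintype.linearIndependent_iff]
    intro g hg p
    have := congrFun hg (vtx p)
    simp [Finset.sum_apply, hx0] at this
    rw [Finset.sum_eq_single p (fun b _ hb => if_neg (Ne.symm hb)) (by simp), if_pos rfl] at this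
    exact this
  -- lift to the kernel
  have hmem : ∀ p : ι, x p ∈ LinearMap.ker (Matrix.toLin' M) := by
    intro p
    rw [LinearMap.mem_ker, Matrix.toLin'_apply]
    exact hker p
  have hy : LinearIndependent ℝ
      (fun p : ι => (⟨x p, hmem p⟩ : LinearMap.ker (Matrix.toLin' M))) := by
    apply LinearIndependent.of_comp (LinearMap.ker (Matrix.toLin' M)).subtype
    exact hli
  have hfin : Fintype.card ι ≤ Module.finrank ℝ (LinearMap.ker (Matrix.toLin' M)) :=
    hy.fintype_card_le_finrank
  -- cardinality computation
  have hcard : Fintype.card ι =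
      ∑ i ∈ Finset.univ.filter (fun i : Fin (2*k) => i.val % 2 = 1), (α i - 1) := by
    have h1 : Fintype.card ι = ∑ i : Fin (2*k), β i := by
      show Fintype.card (Σ i : Fin (2*k), Fin (β i)) = _
      simp [Fintype.card_sigma]
    rw [h1, Finset.sum_filter]
  have hF := card_odd k
  have hsum : (∑ i ∈ Finset.univ.filter (fun i : Fin (2*k) => i.val % 2 = 1), α i)
      = (∑ i ∈ Finset.univ.filter (fun i : Fin (2*k) => i.val % 2 = 1), (α i - 1)) + k := by
    calc (∑ i ∈ Finset.univ.filter (fun i : Fin (2*k) => i.val % 2 = 1), α i)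
        = ∑ i ∈ Finset.univ.filter (fun i : Fin (2*k) => i.val % 2 = 1), ((α i - 1) + 1) :=
          Finset.sum_congr rfl (fun i _ => by have := hα i; omega)
      _ = (∑ i ∈ Finset.univ.filter (fun i : Fin (2*k) => i.val % 2 = 1), (α i - 1))
          + (Finset.univ.filter (fun i : Fin (2*k) => i.val % 2 = 1)).card := by
          rw [Finset.sum_add_distrib, Finset.sum_const, smul_eq_mul, mul_one]
      _ = _ := by rw [hF]
  show (∑ i ∈ Finset.univ.filter (fun i : Fin (2*k) => i.val % 2 = 1), α i) - k ≤
      Module.finrank ℝ (LinearMap.ker (Matrix.toLin' M))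
  omega
end

section
/- Let Q̃ be the (2k-1)×(2k-1) quotient matrix of the eccentricity matrix of G = C(α₁,...,α_{2k}) (k ≥ 2, all α_i ≥ 1). Then -2 is not an eigenvalue of Q̃; equivalently, Q̃ + 2I is nonsingular. -/
open Finset Matrix

/-- The quotient matrix `Q̃` of the eccentricity matrix of `C(α₁,…,α_{2k})`
with respect to the first `2k-1` blocks (indices here are 0-based; the paper's
row/column `r` is `r-1` here, so paper-odd rows correspond to even `i`). -/
noncomputable def Qtilde (k : ℕ) (α : Fin (2*k) → ℕ) :
    Matrix (Fin (2*k-1)) (Fin (2*k-1)) ℝ :=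
  Matrix.of fun i j =>
    let a : Fin (2*k-1) → ℝ := fun m => (α (Fin.castLE (by omega) m) : ℝ)
    if i.val % 2 = 0 then
      if j.val % 2 = 0 then (if i = j then 0 else 2 * a j)
      else (if j.val < i.val then 2 * a j else 0)
    else
      if i = j then 2 * (a i - 1)
      else if j.val % 2 = 0 ∧ i.val < j.val then 2 * a j else 0

noncomputable def aa (k : ℕ) (α : Fin (2*k) → ℕ) : ℕ → ℝ :=
  fun m => if h : m < 2*k then (α ⟨m, h⟩ : ℝ) else 1

lemma aa_one_le (k : ℕ) (α : Fin (2*k) → ℕ) (hα : ∀ i, 1 ≤ α i) (m : ℕ) :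
    1 ≤ aa k α m := by
  unfold aa; split
  · exact_mod_cast hα _
  · exact le_refl 1

lemma Mval (k : ℕ) (α : Fin (2*k) → ℕ) (i j : Fin (2*k-1)) :
    (Qtilde k α + 2 • (1 : Matrix (Fin (2*k-1)) (Fin (2*k-1)) ℝ)) i j =
      if i.val % 2 = 0 then
        if j.val % 2 = 0 then (if i.val = j.val then 2 else 2 * aa k α j.val)
        else (if j.val < i.val then 2 * aa k α j.val else 0)
      else
        if i.val = j.val then 2 * aa k α i.val
        else if j.val % 2 = 0 ∧ i.val < j.val then 2 * aa k α j.val else 0 := by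
  have hj : (j : ℕ) < 2*k := by have := j.isLt; omega
  have hi : (i : ℕ) < 2*k := by have := i.isLt; omega
  have ha : ∀ m : Fin (2*k-1), (α (Fin.castLE (by omega) m) : ℝ) = aa k α m.val := by
    intro m
    have hm : (m : ℕ) < 2*k := by have := m.isLt; omega
    rw [aa, dif_pos hm]
    rfl
  simp only [Qtilde, Matrix.add_apply, Matrix.smul_apply, Matrix.one_apply,
    Matrix.of_apply, Fin.ext_iff, ha, smul_eq_mul, mul_ite, mul_one, mul_zero]
  split_ifs <;> first | ring1 | (exfalso; omega) | (exfalso; exact ‹False›) | (exfalso; exact ‹¬True› trivial)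

lemma sum_eq_two {n : ℕ} (f : Fin n → ℝ) (p q : Fin n) (hpq : p ≠ q)
    (h0 : ∀ j, j ≠ p → j ≠ q → f j = 0) : ∑ j, f j = f p + f q := by
  have hsub : ∑ j ∈ ({p, q} : Finset (Fin n)), f j = ∑ j, f j := by
    apply Finset.sum_subset (Finset.subset_univ _)
    intro j _ hj
    simp only [Finset.mem_insert, Finset.mem_singleton, not_or] at hj
    exact h0 j hj.1 hj.2
  rw [← hsub, Finset.sum_insert (by simpa using hpq), Finset.sum_singleton]

lemma sum_eq_three {n : ℕ} (f : Fin n → ℝ) (p q r : Fin n) (hpq : p ≠ q) (hpr : p ≠ r)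
    (hqr : q ≠ r) (h0 : ∀ j, j ≠ p → j ≠ q → j ≠ r → f j = 0) :
    ∑ j, f j = f p + f q + f r := by
  have hsub : ∑ j ∈ ({p, q, r} : Finset (Fin n)), f j = ∑ j, f j := by
    apply Finset.sum_subset (Finset.subset_univ _)
    intro j _ hj
    simp only [Finset.mem_insert, Finset.mem_singleton, not_or] at hj
    exact h0 j hj.1 hj.2.1 hj.2.2
  rw [← hsub, Finset.sum_insert (by simp [hpq, hpr]),
    Finset.sum_insert (by simpa using hqr), Finset.sum_singleton, add_assoc]

lemma tridiag_zero (N : ℕ) (b u : ℕ → ℝ) (hb : ∀ t, 1 ≤ b t)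
    (h0 : b 0 * u 0 + (1 - b 1) * u 1 = 0)
    (hmid : ∀ s, s < N →
      (1 - b s) * u s + (3 * b (s+1) - 2) * u (s+1) + (1 - b (s+2)) * u (s+2) = 0)
    (hlast : (1 - b N) * u N + (2 * b (N+1) - 1) * u (N+1) = 0) :
    ∀ t, t < N + 2 → u t = 0 := by
  classical
  set ε : ℕ → ℝ := fun s => if u s < 0 then -1 else 1 with hε
  have hεu : ∀ s, ε s * u s = |u s| := by
    intro s; by_cases h : u s < 0
    · simp [hε, h, abs_of_neg h]
    · simp [hε, h, abs_of_nonneg (le_of_not_gt h)]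
  have hεabs : ∀ s, |ε s| = 1 := by
    intro s; by_cases h : u s < 0 <;> simp [hε, h]
  have cross : ∀ r s c : ℕ, -((b c - 1) * |u s|) ≤ ε r * ((1 - b c) * u s) := by
    intro r s c
    have h1 : |ε r * ((1 - b c) * u s)| ≤ (b c - 1) * |u s| := by
      rw [abs_mul, abs_mul, hεabs, one_mul,
        abs_of_nonpos (by linarith [hb c] : (1:ℝ) - b c ≤ 0)]
      apply le_of_eq; ring
    linarith [neg_abs_le (ε r * ((1 - b c) * u s))]
  set d : ℕ → ℝ := fun t => if t = 0 then b 0 else if t = N+1 then 2 * b t - 1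
    else 3 * b t - 2 with hd
  set g : ℕ → ℝ := fun t =>
    (if t = 0 then 0 else (1 - b (t-1)) * u (t-1)) + d t * u t +
    (if t = N+1 then 0 else (1 - b (t+1)) * u (t+1)) with hg
  have hgz : ∀ t < N + 2, g t = 0 := by
    intro t ht
    rcases t with _ | s
    · simp only [hg, hd, if_pos rfl, if_neg (Nat.succ_ne_zero N).symm]
      simpa using h0
    · by_cases hs : s + 1 = N + 1
      · have hsN : s = N := by omega
        subst hsN
        simp only [hg, hd, if_neg (Nat.succ_ne_zero s), if_pos rfl]
        simpa using hlast
      · have hsN : s < N := by omega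
        simp only [hg, hd, if_neg (Nat.succ_ne_zero s), if_neg hs]
        simpa using hmid s hsN
  have hZ : ∑ t ∈ range (N+2), ε t * g t = 0 :=
    Finset.sum_eq_zero fun t ht => by rw [hgz t (mem_range.mp ht), mul_zero]
  have hsplit : ∑ t ∈ range (N+2), ε t * g t =
      (∑ t ∈ range (N+2), d t * |u t|) +
      ∑ s ∈ range (N+1), (ε (s+1) * ((1 - b s) * u s) + ε s * ((1 - b (s+1)) * u (s+1))) := by
    have e1 : ∀ t, ε t * g t =
        ε t * (if t = 0 then 0 else (1 - b (t-1)) * u (t-1)) + d t * (ε t * u t) +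
        ε t * (if t = N+1 then 0 else (1 - b (t+1)) * u (t+1)) := by
      intro t; simp only [hg]; ring
    rw [Finset.sum_congr rfl fun t _ => e1 t]
    rw [Finset.sum_add_distrib, Finset.sum_add_distrib]
    have eA : ∑ t ∈ range (N+2), ε t * (if t = 0 then 0 else (1 - b (t-1)) * u (t-1)) =
        ∑ s ∈ range (N+1), ε (s+1) * ((1 - b s) * u s) := by
      rw [Finset.sum_range_succ']
      simp
    have eB : ∑ t ∈ range (N+2), ε t * (if t = N+1 then 0 else (1 - b (t+1)) * u (t+1)) =
        ∑ s ∈ range (N+1), ε s * ((1 - b (s+1)) * u (s+1)) := by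
      rw [Finset.sum_range_succ]
      rw [if_pos rfl]
      rw [Finset.sum_congr rfl fun t ht => by
        rw [if_neg (by have := mem_range.mp ht; omega : ¬ t = N+1)]]
      simp
    have eD : ∑ t ∈ range (N+2), d t * (ε t * u t) = ∑ t ∈ range (N+2), d t * |u t| :=
      Finset.sum_congr rfl fun t _ => by rw [hεu]
    rw [eA, eB, eD, Finset.sum_add_distrib]; ring
  have hcross : ∑ s ∈ range (N+1), (ε (s+1) * ((1 - b s) * u s) + ε s * ((1 - b (s+1)) * u (s+1)))
      ≥ ∑ s ∈ range (N+1), (-((b s - 1) * |u s|) + -((b (s+1) - 1) * |u (s+1)|)) := by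
    apply Finset.sum_le_sum
    intro s _
    exact add_le_add (cross (s+1) s s) (cross s (s+1) (s+1))
  have eA' : ∑ s ∈ range (N+1), ((b s - 1) * |u s|) =
      ∑ t ∈ range (N+2), (if t = N+1 then 0 else (b t - 1) * |u t|) := by
    conv_rhs => rw [Finset.sum_range_succ]
    rw [if_pos rfl, add_zero]
    exact Finset.sum_congr rfl fun t ht =>
      (if_neg (by have := mem_range.mp ht; omega : ¬ t = N+1)).symm
  have eB' : ∑ s ∈ range (N+1), ((b (s+1) - 1) * |u (s+1)|) =
      ∑ t ∈ range (N+2), (if t = 0 then 0 else (b t - 1) * |u t|) := by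
    conv_rhs => rw [Finset.sum_range_succ']
    simp
  have hterm : ∀ t ∈ range (N+2), |u t| ≤ d t * |u t| -
      ((if t = N+1 then 0 else (b t - 1) * |u t|) + (if t = 0 then 0 else (b t - 1) * |u t|)) := by
    intro t _
    have hbt := hb t
    have habs := abs_nonneg (u t)
    rcases eq_or_ne t 0 with rfl | ht0
    · rw [if_neg (by omega : ¬ (0:ℕ) = N+1), if_pos rfl]
      simp only [hd, if_pos rfl]
      nlinarith [hb 0, abs_nonneg (u 0)]
    · rcases eq_or_ne t (N+1) with rfl | htN
      · rw [if_pos rfl, if_neg ht0]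
        simp [hd, ht0]
        nlinarith [hb (N+1), abs_nonneg (u (N+1))]
      · rw [if_neg htN, if_neg ht0]
        simp [hd, ht0, htN]
        nlinarith
  have h2 : ∑ t ∈ range (N+2), |u t| ≤ (∑ t ∈ range (N+2), d t * |u t|) -
      ((∑ s ∈ range (N+1), ((b s - 1) * |u s|)) +
       (∑ s ∈ range (N+1), ((b (s+1) - 1) * |u (s+1)|))) := by
    have h := Finset.sum_le_sum hterm
    rw [Finset.sum_sub_distrib, Finset.sum_add_distrib] at h
    rw [eA', eB']
    exact h
  have h3 : ∑ s ∈ range (N+1), (-((b s - 1) * |u s|) + -((b (s+1) - 1) * |u (s+1)|)) =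
      -((∑ s ∈ range (N+1), ((b s - 1) * |u s|)) +
        (∑ s ∈ range (N+1), ((b (s+1) - 1) * |u (s+1)|))) := by
    rw [Finset.sum_add_distrib]
    rw [Finset.sum_neg_distrib, Finset.sum_neg_distrib]
    ring
  have key : ∑ t ∈ range (N+2), |u t| ≤ 0 := by linarith
  have hnn : ∀ t ∈ range (N+2), (0:ℝ) ≤ |u t| := fun t _ => abs_nonneg (u t)
  have hzero : ∀ t ∈ range (N+2), |u t| = 0 :=
    (Finset.sum_eq_zero_iff_of_nonneg hnn).mp
      (le_antisymm key (Finset.sum_nonneg hnn))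
  intro t ht
  exact abs_eq_zero.mp (hzero t (mem_range.mpr ht))

set_option maxHeartbeats 3200000 in
theorem kernel_triv (k : ℕ) (hk : 2 ≤ k) (α : Fin (2*k) → ℕ) (hα : ∀ i, 1 ≤ α i)
    (x : Fin (2*k-1) → ℝ)
    (hx : (Qtilde k α + 2 • (1 : Matrix (Fin (2*k-1)) (Fin (2*k-1)) ℝ)).mulVec x = 0) :
    x = 0 := by
  obtain ⟨K, rfl⟩ : ∃ K, k = K + 2 := ⟨k - 2, by omega⟩
  set M := Qtilde (K+2) α + 2 • (1 : Matrix (Fin (2*(K+2)-1)) (Fin (2*(K+2)-1)) ℝ) with hM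
  have row : ∀ i, ∑ j, M i j * x j = 0 := by
    intro i
    have h := congrFun hx i
    simpa [Matrix.mulVec, dotProduct, hM] using h
  set xx : ℕ → ℝ := fun m => if h : m < 2*(K+2)-1 then x ⟨m, h⟩ else 0 with hxx
  have hxv : ∀ (m : ℕ) (h : m < 2*(K+2)-1), x ⟨m, h⟩ = xx m := by
    intro m h; simp only [hxx]; rw [dif_pos h]
  -- Family F1 : difference of even rows 2t and 2t+2
  have F1 : ∀ t, t ≤ K →
      (aa (K+2) α (2*t) - 1) * xx (2*t) + aa (K+2) α (2*t+1) * xx (2*t+1)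
        + (1 - aa (K+2) α (2*t+2)) * xx (2*t+2) = 0 := by
    intro t ht
    have hb1 : 2*t < 2*(K+2)-1 := by omega
    have hb2 : 2*t+1 < 2*(K+2)-1 := by omega
    have hb3 : 2*t+2 < 2*(K+2)-1 := by omega
    have e : ∑ j, (M ⟨2*t+2, hb3⟩ j - M ⟨2*t, hb1⟩ j) * x j = 0 := by
      have h1 : ∑ j, (M ⟨2*t+2, hb3⟩ j - M ⟨2*t, hb1⟩ j) * x j =
          (∑ j, M ⟨2*t+2, hb3⟩ j * x j) - ∑ j, M ⟨2*t, hb1⟩ j * x j := by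
        rw [← Finset.sum_sub_distrib]; congr 1; ext j; ring
      rw [h1, row, row, sub_zero]
    have e3 := sum_eq_three (fun j => (M ⟨2*t+2, hb3⟩ j - M ⟨2*t, hb1⟩ j) * x j)
      ⟨2*t, hb1⟩ ⟨2*t+1, hb2⟩ ⟨2*t+2, hb3⟩
      (by simp [Fin.ext_iff]) (by simp [Fin.ext_iff]) (by simp [Fin.ext_iff])
      (by
        intro j hj1 hj2 hj3
        have hv1 : (j : ℕ) ≠ 2*t := fun h => hj1 (Fin.ext h)
        have hv2 : (j : ℕ) ≠ 2*t+1 := fun h => hj2 (Fin.ext h)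
        have hv3 : (j : ℕ) ≠ 2*t+2 := fun h => hj3 (Fin.ext h)
        have hjlt := j.isLt
        have hz : M ⟨2*t+2, hb3⟩ j - M ⟨2*t, hb1⟩ j = 0 := by
          rw [hM, Mval, Mval]
          simp only [Fin.val_mk]
          split_ifs <;> first | ring1 | (exfalso; omega) | (exfalso; exact ‹False›) | (exfalso; exact ‹¬True› trivial)
        simp only [hz, zero_mul])
    rw [e3] at e
    have E1 : M ⟨2*t+2, hb3⟩ ⟨2*t, hb1⟩ = 2 * aa (K+2) α (2*t) := by
      rw [hM, Mval]; simp only [Fin.val_mk]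
      split_ifs <;> first | ring1 | (exfalso; omega) | (exfalso; exact ‹False›) | (exfalso; exact ‹¬True› trivial)
    have E2 : M ⟨2*t+2, hb3⟩ ⟨2*t+1, hb2⟩ = 2 * aa (K+2) α (2*t+1) := by
      rw [hM, Mval]; simp only [Fin.val_mk]
      split_ifs <;> first | ring1 | (exfalso; omega) | (exfalso; exact ‹False›) | (exfalso; exact ‹¬True› trivial)
    have E3 : M ⟨2*t+2, hb3⟩ ⟨2*t+2, hb3⟩ = 2 := by
      rw [hM, Mval]; simp only [Fin.val_mk]
      split_ifs <;> first | ring1 | (exfalso; omega) | (exfalso; exact ‹False›) | (exfalso; exact ‹¬True› trivial)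
    have E4 : M ⟨2*t, hb1⟩ ⟨2*t, hb1⟩ = 2 := by
      rw [hM, Mval]; simp only [Fin.val_mk]
      split_ifs <;> first | ring1 | (exfalso; omega) | (exfalso; exact ‹False›) | (exfalso; exact ‹¬True› trivial)
    have E5 : M ⟨2*t, hb1⟩ ⟨2*t+1, hb2⟩ = 0 := by
      rw [hM, Mval]; simp only [Fin.val_mk]
      split_ifs <;> first | ring1 | (exfalso; omega) | (exfalso; exact ‹False›) | (exfalso; exact ‹¬True› trivial)
    have E6 : M ⟨2*t, hb1⟩ ⟨2*t+2, hb3⟩ = 2 * aa (K+2) α (2*t+2) := by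
      rw [hM, Mval]; simp only [Fin.val_mk]
      split_ifs <;> first | ring1 | (exfalso; omega) | (exfalso; exact ‹False›) | (exfalso; exact ‹¬True› trivial)
    rw [E1, E2, E3, E4, E5, E6, hxv _ hb1, hxv _ hb2, hxv _ hb3] at e
    linear_combination e / 2
  -- F2 : rows 0 and 1
  have F2 : xx 0 - aa (K+2) α 1 * xx 1 = 0 := by
    have hb1 : 0 < 2*(K+2)-1 := by omega
    have hb2 : 1 < 2*(K+2)-1 := by omega
    have e : ∑ j, (M ⟨0, hb1⟩ j - M ⟨1, hb2⟩ j) * x j = 0 := by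
      have h1 : ∑ j, (M ⟨0, hb1⟩ j - M ⟨1, hb2⟩ j) * x j =
          (∑ j, M ⟨0, hb1⟩ j * x j) - ∑ j, M ⟨1, hb2⟩ j * x j := by
        rw [← Finset.sum_sub_distrib]; congr 1; ext j; ring
      rw [h1, row, row, sub_zero]
    have e2 := sum_eq_two (fun j => (M ⟨0, hb1⟩ j - M ⟨1, hb2⟩ j) * x j)
      ⟨0, hb1⟩ ⟨1, hb2⟩ (by simp [Fin.ext_iff])
      (by
        intro j hj1 hj2
        have hv1 : (j : ℕ) ≠ 0 := fun h => hj1 (Fin.ext h)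
        have hv2 : (j : ℕ) ≠ 1 := fun h => hj2 (Fin.ext h)
        have hjlt := j.isLt
        have hz : M ⟨0, hb1⟩ j - M ⟨1, hb2⟩ j = 0 := by
          rw [hM, Mval, Mval]
          simp only [Fin.val_mk]
          split_ifs <;> first | ring1 | (exfalso; omega) | (exfalso; exact ‹False›) | (exfalso; exact ‹¬True› trivial)
        simp only [hz, zero_mul])
    rw [e2] at e
    have E1 : M ⟨0, hb1⟩ ⟨0, hb1⟩ = 2 := by
      rw [hM, Mval]; simp only [Fin.val_mk]
      split_ifs <;> first | ring1 | (exfalso; omega) | (exfalso; exact ‹False›) | (exfalso; exact ‹¬True› trivial)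
    have E2 : M ⟨0, hb1⟩ ⟨1, hb2⟩ = 0 := by
      rw [hM, Mval]; simp only [Fin.val_mk]
      split_ifs <;> first | ring1 | (exfalso; omega) | (exfalso; exact ‹False›) | (exfalso; exact ‹¬True› trivial)
    have E3 : M ⟨1, hb2⟩ ⟨0, hb1⟩ = 0 := by
      rw [hM, Mval]; simp only [Fin.val_mk]
      split_ifs <;> first | ring1 | (exfalso; omega) | (exfalso; exact ‹False›) | (exfalso; exact ‹¬True› trivial)
    have E4 : M ⟨1, hb2⟩ ⟨1, hb2⟩ = 2 * aa (K+2) α 1 := by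
      rw [hM, Mval]; simp only [Fin.val_mk]
      split_ifs <;> first | ring1 | (exfalso; omega) | (exfalso; exact ‹False›) | (exfalso; exact ‹¬True› trivial)
    rw [E1, E2, E3, E4, hxv _ hb1, hxv _ hb2] at e
    linear_combination e / 2
  -- F3 : difference of odd rows 2s+1 and 2s+3
  have F3 : ∀ s, s < K →
      aa (K+2) α (2*s+1) * xx (2*s+1) + aa (K+2) α (2*s+2) * xx (2*s+2)
        - aa (K+2) α (2*s+3) * xx (2*s+3) = 0 := by
    intro s hs
    have hb1 : 2*s+1 < 2*(K+2)-1 := by omega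
    have hb2 : 2*s+2 < 2*(K+2)-1 := by omega
    have hb3 : 2*s+3 < 2*(K+2)-1 := by omega
    have e : ∑ j, (M ⟨2*s+1, hb1⟩ j - M ⟨2*s+3, hb3⟩ j) * x j = 0 := by
      have h1 : ∑ j, (M ⟨2*s+1, hb1⟩ j - M ⟨2*s+3, hb3⟩ j) * x j =
          (∑ j, M ⟨2*s+1, hb1⟩ j * x j) - ∑ j, M ⟨2*s+3, hb3⟩ j * x j := by
        rw [← Finset.sum_sub_distrib]; congr 1; ext j; ring
      rw [h1, row, row, sub_zero]
    have e3 := sum_eq_three (fun j => (M ⟨2*s+1, hb1⟩ j - M ⟨2*s+3, hb3⟩ j) * x j)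
      ⟨2*s+1, hb1⟩ ⟨2*s+2, hb2⟩ ⟨2*s+3, hb3⟩
      (by simp [Fin.ext_iff]) (by simp [Fin.ext_iff]) (by simp [Fin.ext_iff])
      (by
        intro j hj1 hj2 hj3
        have hv1 : (j : ℕ) ≠ 2*s+1 := fun h => hj1 (Fin.ext h)
        have hv2 : (j : ℕ) ≠ 2*s+2 := fun h => hj2 (Fin.ext h)
        have hv3 : (j : ℕ) ≠ 2*s+3 := fun h => hj3 (Fin.ext h)
        have hjlt := j.isLt
        have hz : M ⟨2*s+1, hb1⟩ j - M ⟨2*s+3, hb3⟩ j = 0 := by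
          rw [hM, Mval, Mval]
          simp only [Fin.val_mk]
          split_ifs <;> first | ring1 | (exfalso; omega) | (exfalso; exact ‹False›) | (exfalso; exact ‹¬True› trivial)
        simp only [hz, zero_mul])
    rw [e3] at e
    have E1 : M ⟨2*s+1, hb1⟩ ⟨2*s+1, hb1⟩ = 2 * aa (K+2) α (2*s+1) := by
      rw [hM, Mval]; simp only [Fin.val_mk]
      split_ifs <;> first | ring1 | (exfalso; omega) | (exfalso; exact ‹False›) | (exfalso; exact ‹¬True› trivial)
    have E2 : M ⟨2*s+1, hb1⟩ ⟨2*s+2, hb2⟩ = 2 * aa (K+2) α (2*s+2) := by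
      rw [hM, Mval]; simp only [Fin.val_mk]
      split_ifs <;> first | ring1 | (exfalso; omega) | (exfalso; exact ‹False›) | (exfalso; exact ‹¬True› trivial)
    have E3 : M ⟨2*s+1, hb1⟩ ⟨2*s+3, hb3⟩ = 0 := by
      rw [hM, Mval]; simp only [Fin.val_mk]
      split_ifs <;> first | ring1 | (exfalso; omega) | (exfalso; exact ‹False›) | (exfalso; exact ‹¬True› trivial)
    have E4 : M ⟨2*s+3, hb3⟩ ⟨2*s+1, hb1⟩ = 0 := by
      rw [hM, Mval]; simp only [Fin.val_mk]
      split_ifs <;> first | ring1 | (exfalso; omega) | (exfalso; exact ‹False›) | (exfalso; exact ‹¬True› trivial)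
    have E5 : M ⟨2*s+3, hb3⟩ ⟨2*s+2, hb2⟩ = 0 := by
      rw [hM, Mval]; simp only [Fin.val_mk]
      split_ifs <;> first | ring1 | (exfalso; omega) | (exfalso; exact ‹False›) | (exfalso; exact ‹¬True› trivial)
    have E6 : M ⟨2*s+3, hb3⟩ ⟨2*s+3, hb3⟩ = 2 * aa (K+2) α (2*s+3) := by
      rw [hM, Mval]; simp only [Fin.val_mk]
      split_ifs <;> first | ring1 | (exfalso; omega) | (exfalso; exact ‹False›) | (exfalso; exact ‹¬True› trivial)
    rw [E1, E2, E3, E4, E5, E6, hxv _ hb1, hxv _ hb2, hxv _ hb3] at e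
    linear_combination e / 2
  -- F4 : last odd row 2K+1
  have F4 : aa (K+2) α (2*K+1) * xx (2*K+1) + aa (K+2) α (2*K+2) * xx (2*K+2) = 0 := by
    have hb1 : 2*K+1 < 2*(K+2)-1 := by omega
    have hb2 : 2*K+2 < 2*(K+2)-1 := by omega
    have e : ∑ j, M ⟨2*K+1, hb1⟩ j * x j = 0 := row _
    have e2 := sum_eq_two (fun j => M ⟨2*K+1, hb1⟩ j * x j)
      ⟨2*K+1, hb1⟩ ⟨2*K+2, hb2⟩ (by simp [Fin.ext_iff])
      (by
        intro j hj1 hj2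
        have hv1 : (j : ℕ) ≠ 2*K+1 := fun h => hj1 (Fin.ext h)
        have hv2 : (j : ℕ) ≠ 2*K+2 := fun h => hj2 (Fin.ext h)
        have hjlt := j.isLt
        have hz : M ⟨2*K+1, hb1⟩ j = 0 := by
          rw [hM, Mval]
          simp only [Fin.val_mk]
          split_ifs <;> first | ring1 | (exfalso; omega) | (exfalso; exact ‹False›) | (exfalso; exact ‹¬True› trivial)
        simp only [hz, zero_mul])
    rw [e2] at e
    have E1 : M ⟨2*K+1, hb1⟩ ⟨2*K+1, hb1⟩ = 2 * aa (K+2) α (2*K+1) := by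
      rw [hM, Mval]; simp only [Fin.val_mk]
      split_ifs <;> first | ring1 | (exfalso; omega) | (exfalso; exact ‹False›) | (exfalso; exact ‹¬True› trivial)
    have E2 : M ⟨2*K+1, hb1⟩ ⟨2*K+2, hb2⟩ = 2 * aa (K+2) α (2*K+2) := by
      rw [hM, Mval]; simp only [Fin.val_mk]
      split_ifs <;> first | ring1 | (exfalso; omega) | (exfalso; exact ‹False›) | (exfalso; exact ‹¬True› trivial)
    rw [E1, E2, hxv _ hb1, hxv _ hb2] at e
    linear_combination e / 2
  -- the tridiagonal system
  have hu : ∀ t, t < K + 2 → xx (2*t) = 0 := by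
    apply tridiag_zero K (fun t => aa (K+2) α (2*t)) (fun t => xx (2*t))
      (fun t => aa_one_le (K+2) α hα (2*t))
    · show aa (K+2) α (2*0) * xx (2*0) + (1 - aa (K+2) α (2*1)) * xx (2*1) = 0
      have A := F1 0 (Nat.zero_le K)
      norm_num at A ⊢
      linear_combination A + F2
    · intro s hs
      show (1 - aa (K+2) α (2*s)) * xx (2*s) + (3 * aa (K+2) α (2*(s+1)) - 2) * xx (2*(s+1))
        + (1 - aa (K+2) α (2*(s+2))) * xx (2*(s+2)) = 0
      have A := F1 (s+1) (by omega)
      have B := F1 s (by omega)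
      have C := F3 s hs
      rw [show 2*(s+1) = 2*s+2 by ring, show 2*(s+2) = 2*s+4 by ring]
      rw [show 2*(s+1) = 2*s+2 by ring] at A
      rw [show 2*s+2+1 = 2*s+3 by ring, show 2*s+2+2 = 2*s+4 by ring] at A
      linear_combination A - B + C
    · show (1 - aa (K+2) α (2*K)) * xx (2*K) + (2 * aa (K+2) α (2*(K+1)) - 1) * xx (2*(K+1)) = 0
      have B := F1 K (le_refl K)
      rw [show 2*(K+1) = 2*K+2 by ring]
      linear_combination F4 - B
  -- the odd entries
  have hodd : ∀ s, s ≤ K → aa (K+2) α (2*s+1) * xx (2*s+1) = 0 := by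
    intro s
    induction s with
    | zero =>
      intro _
      have h0 : xx (2*0) = 0 := hu 0 (by omega)
      rw [show (2*0 : ℕ) = 0 by norm_num] at h0
      rw [show (2*0+1 : ℕ) = 1 by norm_num]
      linear_combination h0 - F2
    | succ s ih =>
      intro hs
      have h1 := ih (by omega)
      have hC := F3 s (by omega)
      have h2 : xx (2*s+2) = 0 := by
        have := hu (s+1) (by omega)
        rwa [show 2*(s+1) = 2*s+2 by ring] at this
      rw [show 2*(s+1)+1 = 2*s+3 by ring]
      linear_combination h1 + aa (K+2) α (2*s+2) * h2 - hC
  have hxodd : ∀ s, s ≤ K → xx (2*s+1) = 0 := by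
    intro s hs
    have h := hodd s hs
    have ha := aa_one_le (K+2) α hα (2*s+1)
    rcases mul_eq_zero.mp h with h' | h'
    · linarith
    · exact h'
  funext j
  have hjlt := j.isLt
  have hxj : x j = xx j.val := by
    have h := hxv j.val j.isLt
    rwa [Fin.eta] at h
  show x j = 0
  rcases Nat.even_or_odd (j : ℕ) with he | ho
  · obtain ⟨t, ht⟩ := he
    have h0 : xx (2*t) = 0 := hu t (by omega)
    rw [hxj, show (j : ℕ) = 2*t by omega, h0]
  · obtain ⟨t, ht⟩ := ho
    have h0 : xx (2*t+1) = 0 := hxodd t (by omega)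
    rw [hxj, show (j : ℕ) = 2*t+1 by omega, h0]

/-- `-2` is not an eigenvalue of `Q̃`; equivalently `Q̃ + 2I` is nonsingular. -/
theorem stmt9 (k : ℕ) (hk : 2 ≤ k) (α : Fin (2*k) → ℕ) (hα : ∀ i, 1 ≤ α i) :
    (¬ ∃ x : Fin (2*k-1) → ℝ, x ≠ 0 ∧ (Qtilde k α).mulVec x = (-2 : ℝ) • x) ∧
    IsUnit (Qtilde k α + 2 • (1 : Matrix (Fin (2*k-1)) (Fin (2*k-1)) ℝ)) := by
  have hker := kernel_triv k hk α hα
  constructor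
  · rintro ⟨x, hx0, hx⟩
    apply hx0
    apply hker
    have h21 : (2 • (1 : Matrix (Fin (2*k-1)) (Fin (2*k-1)) ℝ)).mulVec x = fun i => 2 * x i := by
      funext i
      simp [Matrix.mulVec, dotProduct, Matrix.smul_apply, Matrix.one_apply,
        ite_mul, mul_ite, Finset.sum_ite_eq]
    rw [Matrix.add_mulVec, hx, h21]
    funext i
    simp only [Pi.add_apply, Pi.smul_apply, Pi.zero_apply, smul_eq_mul]
    ring
  · rw [Matrix.isUnit_iff_isUnit_det, isUnit_iff_ne_zero]
    intro hdet
    obtain ⟨v, hv, hMv⟩ := Matrix.exists_mulVec_eq_zero_iff.mpr hdet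
    exact hv (hker v hMv)
end
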